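/- arXiv:1406.6450 — 4 statements merged into one kernel-verified Lean document; each statement's English description precedes it below -/
import Mathlib

section
/- For every nonnegative integer n, the central binomial coefficient C(2n,n) equals (1/π) ∫₀⁴ sⁿ/√(4s−s²) ds. -/
open Real MeasureTheory intervalIntegral Set

lemma prod_eq_choose (n : ℕ) :
    (4:ℝ) ^ n * ∏ i ∈ Finset.range n, (2 * (i:ℝ) + 1) / (2 * i + 2) = (2 * n).choose n := by
  induction n with
  | zero => simp
  | succ k ih =>
    have hrec : ((k:ℝ) + 1) * ((2 * (k + 1)).choose (k + 1) : ℝ)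
        = 2 * (2 * k + 1) * ((2 * k).choose k : ℝ) := by
      have := Nat.succ_mul_centralBinom_succ k
      have h2 : ((k + 1) * Nat.centralBinom (k + 1) : ℝ)
          = (2 * (2 * k + 1) * Nat.centralBinom k : ℝ) := by exact_mod_cast congrArg Nat.cast this
      simpa [Nat.centralBinom, mul_comm, mul_assoc, mul_left_comm] using h2
    rw [Finset.prod_range_succ, pow_succ]
    have hk1 : (2 * (k:ℝ) + 2) ≠ 0 := by positivity
    have hk2 : ((k:ℝ) + 1) ≠ 0 := by positivity
    rw [show (4:ℝ) ^ k * 4 * ((∏ i ∈ Finset.range k, (2 * (i:ℝ) + 1) / (2 * i + 2))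
          * ((2 * k + 1) / (2 * k + 2)))
        = ((4 : ℝ) ^ k * ∏ i ∈ Finset.range k, (2 * (i:ℝ) + 1) / (2 * i + 2))
          * (4 * (2 * k + 1) / (2 * k + 2)) by ring, ih]
    have hcast : ((2 * (k + 1)).choose (k + 1) : ℝ)
        = 2 * (2 * k + 1) * ((2 * k).choose k : ℝ) / (k + 1) := by
      field_simp
      linarith [hrec]
    rw [hcast]
    field_simp
    ring

theorem central_binom_integral (n : ℕ) :
    ((2 * n).choose n : ℝ) =
      (1 / Real.pi) * ∫ s in (0:ℝ)..4, s ^ n / Real.sqrt (4 * s - s ^ 2) := by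
  set f : ℝ → ℝ := fun θ => 2 - 2 * Real.cos θ with hf
  set g : ℝ → ℝ := fun s => s ^ n / Real.sqrt (4 * s - s ^ 2) with hg
  -- image of (0, π) under f is (0, 4)
  have himg : f '' Ioo 0 π = Ioo (0:ℝ) 4 := by
    ext y
    constructor
    · rintro ⟨θ, ⟨h0, hπ⟩, rfl⟩
      have h1 : Real.cos θ < 1 := by
        have := Real.strictAntiOn_cos ⟨le_refl 0, Real.pi_pos.le⟩ ⟨h0.le, hπ.le⟩ h0
        simpa using this
      have h2 : -1 < Real.cos θ := by
        have := Real.strictAntiOn_cos ⟨h0.le, hπ.le⟩ ⟨Real.pi_pos.le, le_refl π⟩ hπ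
        simpa using this
      constructor <;> simp only [hf] <;> linarith
    · rintro ⟨hy0, hy4⟩
      refine ⟨Real.arccos ((2 - y) / 2), ⟨?_, ?_⟩, ?_⟩
      · rw [Real.arccos_pos]; linarith
      · rcases lt_or_eq_of_le (Real.arccos_le_pi ((2 - y) / 2)) with h | h
        · exact h
        · exfalso
          have := Real.cos_arccos (by linarith : (-1:ℝ) ≤ (2 - y)/2)
            (by linarith : ((2:ℝ) - y)/2 ≤ 1)
          rw [h, Real.cos_pi] at this
          linarith
      · have := Real.cos_arccos (by linarith : (-1:ℝ) ≤ (2 - y)/2)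
          (by linarith : ((2:ℝ) - y)/2 ≤ 1)
        simp only [hf]
        rw [this]; ring
  have hderiv : ∀ θ ∈ Ioo (0:ℝ) π,
      HasDerivWithinAt f (2 * Real.sin θ) (Ioo 0 π) θ := by
    intro θ _
    have h : HasDerivAt f (2 * Real.sin θ) θ := by
      have := ((Real.hasDerivAt_cos θ).const_mul (2:ℝ)).const_sub 2
      simpa [mul_comm] using this
    exact h.hasDerivWithinAt
  have hinj : InjOn f (Ioo 0 π) := by
    intro a ha b hb hab
    have hc : Real.cos a = Real.cos b := by simp only [hf] at hab; linarith
    exact Real.injOn_cos ⟨ha.1.le, ha.2.le⟩ ⟨hb.1.le, hb.2.le⟩ hc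
  have key := integral_image_eq_integral_abs_deriv_smul measurableSet_Ioo hderiv hinj g
  rw [himg] at key
  -- simplify the θ-integrand
  have hcongr : ∀ θ ∈ Ioo (0:ℝ) π,
      |2 * Real.sin θ| • g (f θ) = (4:ℝ) ^ n * Real.sin (θ / 2) ^ (2 * n) := by
    intro θ ⟨h0, hπ⟩
    have hs : 0 < Real.sin θ := Real.sin_pos_of_pos_of_lt_pi h0 hπ
    have hsq : 4 * f θ - (f θ) ^ 2 = (2 * Real.sin θ) ^ 2 := by
      have := Real.sin_sq_add_cos_sq θ
      simp only [hf]; nlinarith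
    have hsqrt : Real.sqrt (4 * f θ - (f θ) ^ 2) = 2 * Real.sin θ := by
      rw [hsq, Real.sqrt_sq (by linarith)]
    have hhalf : f θ = 4 * Real.sin (θ / 2) ^ 2 := by
      have h1 := Real.cos_two_mul (θ / 2)
      have h2 := Real.sin_sq_add_cos_sq (θ / 2)
      rw [show (2:ℝ) * (θ / 2) = θ by ring] at h1
      simp only [hf]; nlinarith
    simp only [hg, smul_eq_mul, hsqrt, abs_of_pos (by linarith : (0:ℝ) < 2 * Real.sin θ)]
    rw [hhalf, mul_pow, ← pow_mul, mul_comm (2 * Real.sin θ)]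
    rw [div_mul_cancel₀ _ (by intro h; nlinarith : (2:ℝ) * Real.sin θ ≠ 0)]
  rw [setIntegral_congr_fun measurableSet_Ioo hcongr] at key
  -- now compute ∫ θ in Ioo 0 π, 4^n * sin(θ/2)^(2n)
  have hIoo : ∫ θ in Ioo (0:ℝ) π, (4:ℝ) ^ n * Real.sin (θ / 2) ^ (2 * n)
      = ∫ θ in (0:ℝ)..π, (4:ℝ) ^ n * Real.sin (θ / 2) ^ (2 * n) := by
    rw [intervalIntegral.integral_of_le Real.pi_pos.le, integral_Ioc_eq_integral_Ioo]
  have hcomp : (∫ θ in (0:ℝ)..π, (4:ℝ) ^ n * Real.sin (θ / 2) ^ (2 * n))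
      = 2 * ∫ x in (0:ℝ)..(π/2), (4:ℝ) ^ n * Real.sin x ^ (2 * n) := by
    have := intervalIntegral.integral_comp_div (a := 0) (b := π)
      (f := fun x => (4:ℝ) ^ n * Real.sin x ^ (2 * n)) (c := 2) two_ne_zero
    simpa [smul_eq_mul] using this
  have hsym : (∫ x in (0:ℝ)..(π/2), Real.sin x ^ (2 * n))
      = (∫ x in (π/2)..π, Real.sin x ^ (2 * n)) := by
    have := intervalIntegral.integral_comp_sub_left
      (a := π/2) (b := π) (fun y => Real.sin y ^ (2 * n)) π
    rw [show π - π = 0 by ring, show π - π/2 = π/2 by ring] at this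
    rw [← this]
    apply intervalIntegral.integral_congr
    intro x _
    simp [Real.sin_pi_sub]
  have hadd : (∫ x in (0:ℝ)..(π/2), Real.sin x ^ (2 * n))
      + (∫ x in (π/2)..π, Real.sin x ^ (2 * n))
      = ∫ x in (0:ℝ)..π, Real.sin x ^ (2 * n) :=
    intervalIntegral.integral_add_adjacent_intervals
      ((Real.continuous_sin.pow _).intervalIntegrable _ _)
      ((Real.continuous_sin.pow _).intervalIntegrable _ _)
  have hval : (∫ x in (0:ℝ)..(π/2), Real.sin x ^ (2 * n))
      = (π * ∏ i ∈ Finset.range n, (2 * (i:ℝ) + 1) / (2 * i + 2)) / 2 := by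
    have := integral_sin_pow_even (n := n)
    rw [← hadd, ← hsym] at this
    linarith
  -- assemble
  have hInt : (∫ s in (0:ℝ)..4, g s)
      = π * ((2 * n).choose n : ℝ) := by
    rw [intervalIntegral.integral_of_le (by norm_num : (0:ℝ) ≤ 4),
      integral_Ioc_eq_integral_Ioo, key, hIoo, hcomp]
    rw [intervalIntegral.integral_const_mul, hval]
    rw [← prod_eq_choose n]
    ring
  simp only [hg] at hInt
  rw [hInt]
  have hπ := Real.pi_ne_zero
  field_simp
end

section
/- Define a₀ := √(1/11) and aₙ := √((4ⁿ + 2ⁿ + 2)/(4ⁿ + 2^{n+1} + 8)) for n ≥ 1, with moments γ_ℓ := a₀²⋯a_{ℓ−1}². Then for all ℓ ≥ 0, γ_ℓ = ∫ s^ℓ dξ_a(s), where ξ_a := (3/4)δ₀ + (2/11)δ_{1/4} + (1/22)δ_{1/2} + (1/44)δ₁. -/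
open MeasureTheory
open scoped ENNReal

theorem moments_eq_integral_xi_a (a : ℕ → ℝ)
    (ha0 : a 0 = Real.sqrt (1 / 11))
    (ha : ∀ n : ℕ, 1 ≤ n →
      a n = Real.sqrt ((4 ^ n + 2 ^ n + 2) / (4 ^ n + 2 ^ (n + 1) + 8)))
    (ξa : Measure ℝ)
    (hξa : ξa = (3 / 4 : ℝ≥0∞) • Measure.dirac (0 : ℝ)
      + (2 / 11 : ℝ≥0∞) • Measure.dirac (1 / 4 : ℝ)
      + (1 / 22 : ℝ≥0∞) • Measure.dirac (1 / 2 : ℝ)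
      + (1 / 44 : ℝ≥0∞) • Measure.dirac (1 : ℝ))
    (l : ℕ) :
    ∏ i ∈ Finset.range l, (a i) ^ 2 = ∫ s, s ^ l ∂ξa := by
  have hint : ∀ (p : ℝ) (c : ℝ≥0∞), c ≠ ⊤ →
      Integrable (fun s : ℝ => s ^ l) (c • Measure.dirac p) := by
    intro p c hc
    exact ((integrable_const (p ^ l)).congr (ae_eq_dirac (fun s : ℝ => s ^ l)).symm).smul_measure hc
  have htop : ∀ (m k : ℕ), k ≠ 0 → ((m : ℝ≥0∞) / (k : ℝ≥0∞)) ≠ ⊤ := fun m k hk =>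
    (ENNReal.div_lt_top (by simp) (by exact_mod_cast hk)).ne
  have i0 : Integrable (fun s : ℝ => s ^ l) ((3/4 : ℝ≥0∞) • Measure.dirac (0:ℝ)) := by
    exact_mod_cast hint 0 _ (htop 3 4 (by norm_num))
  have i1 : Integrable (fun s : ℝ => s ^ l) ((2/11 : ℝ≥0∞) • Measure.dirac (1/4:ℝ)) := by
    exact_mod_cast hint (1/4) _ (htop 2 11 (by norm_num))
  have i2 : Integrable (fun s : ℝ => s ^ l) ((1/22 : ℝ≥0∞) • Measure.dirac (1/2:ℝ)) := by
    exact_mod_cast hint (1/2) _ (htop 1 22 (by norm_num))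
  have i3 : Integrable (fun s : ℝ => s ^ l) ((1/44 : ℝ≥0∞) • Measure.dirac (1:ℝ)) := by
    exact_mod_cast hint 1 _ (htop 1 44 (by norm_num))
  have hRHS : ∫ s, s ^ l ∂ξa
      = (3/4) * (0:ℝ) ^ l + (2/11) * (1/4:ℝ) ^ l + (1/22) * (1/2:ℝ) ^ l + (1/44) * (1:ℝ) ^ l := by
    rw [hξa,
      integral_add_measure ((i0.add_measure i1).add_measure i2) i3,
      integral_add_measure (i0.add_measure i1) i2,
      integral_add_measure i0 i1,
      integral_smul_measure, integral_smul_measure, integral_smul_measure, integral_smul_measure,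
      integral_dirac, integral_dirac, integral_dirac, integral_dirac]
    norm_num [ENNReal.toReal_div]
  rw [hRHS]
  rcases Nat.eq_zero_or_pos l with h0 | hl
  · subst h0; norm_num
  · -- closed form for the product, l ≥ 1
    have key : ∀ m : ℕ, 1 ≤ m →
        ∏ i ∈ Finset.range m, (a i) ^ 2 = (4 ^ m + 2 ^ (m + 1) + 8) / (44 * 4 ^ m) := by
      intro m hm
      induction m with
      | zero => omega
      | succ n ih =>
        rcases Nat.eq_zero_or_pos n with h0 | hn
        · subst h0
          simp [ha0, Real.sq_sqrt (by norm_num : (1/11:ℝ) ≥ 0)]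
          norm_num
        · rw [Finset.prod_range_succ, ih hn, ha n hn]
          have hden : (0:ℝ) < 4 ^ n + 2 ^ (n + 1) + 8 := by positivity
          have hnum : (0:ℝ) ≤ 4 ^ n + 2 ^ n + 2 := by positivity
          rw [Real.sq_sqrt (by positivity)]
          have h4 : (0:ℝ) < (4:ℝ) ^ n := by positivity
          field_simp
          ring_nf
    rw [key l hl]
    have hz : (0:ℝ) ^ l = 0 := zero_pow (by omega)
    have h4 : (4:ℝ) ^ l = 2 ^ l * 2 ^ l := by rw [← mul_pow]; norm_num
    have h12 : ((1:ℝ)/2) ^ l = 1 / 2 ^ l := by rw [div_pow, one_pow]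
    have h14 : ((1:ℝ)/4) ^ l = 1 / (2 ^ l * 2 ^ l) := by rw [div_pow, one_pow, h4]
    have hx : (0:ℝ) < (2:ℝ) ^ l := by positivity
    rw [hz, pow_succ, h4, h12, h14]
    field_simp
    ring
end

section
/- Define cₙ := √((2^{n+1} + 1)/(2^{n+2} + 4)) for n ≥ 0, with moments γ_ℓ := c₀²⋯c_{ℓ−1}². Then for all ℓ ≥ 0, γ_ℓ = (1/2)(1/4)^ℓ + (1/2)(1/2)^ℓ = ∫ s^ℓ dξ_c(s), where ξ_c := (1/2)δ_{1/4} + (1/2)δ_{1/2}. -/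
open MeasureTheory
open scoped ENNReal

theorem moments_eq_integral_xi_c (c : ℕ → ℝ)
    (hc : ∀ n : ℕ, c n = Real.sqrt ((2 ^ (n + 1) + 1) / (2 ^ (n + 2) + 4)))
    (ξc : Measure ℝ)
    (hξc : ξc = (1 / 2 : ℝ≥0∞) • Measure.dirac (1 / 4 : ℝ)
      + (1 / 2 : ℝ≥0∞) • Measure.dirac (1 / 2 : ℝ))
    (l : ℕ) :
    ∏ i ∈ Finset.range l, (c i) ^ 2 = (1 / 2) * (1 / 4) ^ l + (1 / 2) * (1 / 2) ^ l ∧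
    ∏ i ∈ Finset.range l, (c i) ^ 2 = ∫ s, s ^ l ∂ξc := by
  have hsq : ∀ n : ℕ, (c n) ^ 2 = (2 ^ (n + 1) + 1) / (2 ^ (n + 2) + 4) := by
    intro n
    rw [hc n, Real.sq_sqrt]
    positivity
  have h1 : ∏ i ∈ Finset.range l, (c i) ^ 2
      = (1 / 2) * (1 / 4) ^ l + (1 / 2) * (1 / 2) ^ l := by
    induction l with
    | zero => norm_num
    | succ n ih =>
      rw [Finset.prod_range_succ, ih, hsq n]
      have h2 : (2 : ℝ) ^ (n + 2) + 4 ≠ 0 := by positivity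
      simp only [show ((1:ℝ)/4) = (1/2)*(1/2) from by norm_num, mul_pow]
      field_simp
      have h3 : ((1:ℝ)/2)^n * 2^n = 1 := by rw [← mul_pow]; norm_num
      linear_combination ((1:ℝ)/2)^n * h3
  refine ⟨h1, ?_⟩
  rw [h1, hξc]
  rw [integral_add_measure, integral_smul_measure, integral_smul_measure,
    integral_dirac, integral_dirac]
  · norm_num
  · exact Integrable.smul_measure
      ((integrable_const _).congr (ae_eq_dirac (fun s : ℝ => s ^ l)).symm) (by norm_num)
  · exact Integrable.smul_measure
      ((integrable_const _).congr (ae_eq_dirac (fun s : ℝ => s ^ l)).symm) (by norm_num)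
end

section
/- The function f(n) := (8((1/2)(1/4)ⁿ + (1/4)(1/2)ⁿ + 1/4))/(11(2(1/4)ⁿ + (1/2)ⁿ)) is monotonically increasing on the nonnegative integers. -/
theorem f_monotone (f : ℕ → ℝ)
    (hf : ∀ n : ℕ, f n = (8 * ((1 / 2) * (1 / 4 : ℝ) ^ n + (1 / 4) * (1 / 2 : ℝ) ^ n + 1 / 4)) /
      (11 * (2 * (1 / 4 : ℝ) ^ n + (1 / 2 : ℝ) ^ n))) :
    Monotone f := by
  apply monotone_nat_of_le_succ
  intro n
  rw [hf n, hf (n + 1)]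
  have hx : (0:ℝ) < (1/2:ℝ)^n := by positivity
  have hy : (0:ℝ) < (1/4:ℝ)^n := by positivity
  have hxy : (1/4:ℝ)^n = ((1/2:ℝ)^n)^2 := by
    rw [← pow_mul, pow_mul']
    norm_num
  rw [pow_succ, pow_succ]
  rw [div_le_div_iff₀ (by nlinarith) (by nlinarith)]
  nlinarith [sq_nonneg ((1/2:ℝ)^n), sq_nonneg ((1/2:ℝ)^n - 1), mul_pos hx hx]
end
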